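/- For every α, β ∈ IPF(ℕ^n), the sets {χ ∈ IPF(ℕ^n) : αχ = β} and {χ ∈ IPF(ℕ^n) : χα = β} are finite; i.e., all left and right translations in IPF(ℕ^n) are finite-to-one maps. -/

import Mathlib

/-- An element of IPF(ℕ^n): a partial bijection of ℕ^n whose source and target are
principal filters and which is an order isomorphism between them. -/
def IsIPF {n : ℕ} (e : PartialEquiv (Fin n → ℕ+) (Fin n → ℕ+)) : Prop :=
  (∃ x, e.source = Set.Ici x) ∧ (∃ y, e.target = Set.Ici y) ∧
    ∀ a ∈ e.source, ∀ b ∈ e.source, a ≤ b ↔ e a ≤ e b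

open Set


lemma natStrictMono_surj_id {f : ℕ → ℕ} (hm : StrictMono f) (hs : Function.Surjective f) :
    ∀ m, f m = m := by
  intro m
  induction m using Nat.strong_induction_on with
  | _ m ih =>
    obtain ⟨k, hk⟩ := hs m
    have h1 : m ≤ f m := hm.le_apply
    rcases lt_trichotomy k m with h | h | h
    · have h2 := ih k h
      omega
    · subst h; omega
    · have : f m < f k := hm h; omega

variable {n : ℕ}

/-- the "chain" property -/
def ChainBelow (v : Fin n → ℕ) : Prop := ∀ a b : Fin n → ℕ, a ≤ v → b ≤ v → a ≤ b ∨ b ≤ a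

lemma single_le_iff {i : Fin n} {m : ℕ} {v : Fin n → ℕ} :
    Pi.single i m ≤ v ↔ m ≤ v i := by
  constructor
  · intro h; simpa using h i
  · intro h j
    rcases eq_or_ne j i with rfl | hj
    · simpa using h
    · simp [Pi.single_eq_of_ne hj]

lemma chainBelow_single (i : Fin n) (m : ℕ) : ChainBelow (Pi.single i m) := by
  intro a b ha hb
  rcases le_total (a i) (b i) with h | h
  · left; intro j
    rcases eq_or_ne j i with rfl | hj
    · exact h
    · have := ha j; simp [Pi.single_eq_of_ne hj] at this; simp [this]
  · right; intro j
    rcases eq_or_ne j i with rfl | hj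
    · exact h
    · have := hb j; simp [Pi.single_eq_of_ne hj] at this; simp [this]

lemma chainBelow_map (e : (Fin n → ℕ) ≃o (Fin n → ℕ)) {v : Fin n → ℕ}
    (h : ChainBelow v) : ChainBelow (e v) := by
  intro a b ha hb
  have ha' : e.symm a ≤ v := by
    have := e.symm.monotone ha; simpa using this
  have hb' : e.symm b ≤ v := by
    have := e.symm.monotone hb; simpa using this
  rcases h _ _ ha' hb' with h' | h'
  · left
    have := e.monotone h'; simpa using this
  · right
    have := e.monotone h'; simpa using this

lemma chainBelow_form {v : Fin n → ℕ} (h : ChainBelow v) :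
    v = 0 ∨ ∃ i m, 0 < m ∧ v = Pi.single i m := by
  by_cases hv : v = 0
  · exact Or.inl hv
  · right
    obtain ⟨i, hi⟩ : ∃ i, v i ≠ 0 := by
      by_contra hc; push_neg at hc; exact hv (funext fun i => hc i)
    refine ⟨i, v i, Nat.pos_of_ne_zero hi, ?_⟩
    have hz : ∀ j, j ≠ i → v j = 0 := by
      intro j hj
      by_contra hjv
      have h1 : Pi.single i (v i) ≤ v := single_le_iff.mpr le_rfl
      have h2 : Pi.single j (v j) ≤ v := single_le_iff.mpr le_rfl
      rcases h _ _ h1 h2 with h' | h'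
      · have := h' i; simp [Pi.single_eq_of_ne (Ne.symm hj)] at this; exact hi this
      · have := h' j; simp [Pi.single_eq_of_ne hj] at this; exact hjv this
    funext j
    rcases eq_or_ne j i with rfl | hj
    · simp
    · simp [Pi.single_eq_of_ne hj, hz j hj]

lemma orderIso_zero (e : (Fin n → ℕ) ≃o (Fin n → ℕ)) : e 0 = 0 := by
  have h1 : e 0 ≤ e (e.symm 0) := e.monotone (by simp : (0:Fin n → ℕ) ≤ e.symm 0)
  simpa using h1

lemma orderIso_single (e : (Fin n → ℕ) ≃o (Fin n → ℕ)) (i : Fin n) :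
    ∃ j, ∀ m, e (Pi.single i m) = Pi.single j m := by
  have key : ∀ m, 0 < m → ∃ j c, 0 < c ∧ e (Pi.single i m) = Pi.single j c := by
    intro m hm
    have hch : ChainBelow (e (Pi.single i m)) := chainBelow_map e (chainBelow_single i m)
    rcases chainBelow_form hch with h0 | h
    · exfalso
      have h2 : (Pi.single i m : Fin n → ℕ) = 0 := by
        apply e.injective
        rw [h0, orderIso_zero e]
      have := congrFun h2 i; simp at this; omega
    · exact h
  obtain ⟨j, c1, hc1, h1⟩ := key 1 one_pos
  have hidx : ∀ m, 0 < m → e (Pi.single i m) = Pi.single j (e (Pi.single i m) j) := by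
    intro m hm
    obtain ⟨j', c', hc', h'⟩ := key m hm
    have hle : e (Pi.single i 1) ≤ e (Pi.single i m) :=
      e.monotone (by
        intro k; rcases eq_or_ne k i with rfl | hk
        · simpa using (show 1 ≤ m from hm)
        · simp [Pi.single_eq_of_ne hk])
    rw [h1, h', Pi.le_def] at hle
    have h2 := hle j
    simp only [Pi.single_eq_same] at h2
    have hj' : j' = j := by
      by_contra hne
      rw [Pi.single_eq_of_ne (Ne.symm hne)] at h2; omega
    subst hj'
    rw [h']; simp
  have hsz : (Pi.single i (0:ℕ) : Fin n → ℕ) = 0 := by simp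
  have hform : ∀ m, e (Pi.single i m) = Pi.single j (e (Pi.single i m) j) := by
    intro m
    rcases Nat.eq_zero_or_pos m with rfl | hm
    · rw [hsz, orderIso_zero e]
      funext k
      rcases eq_or_ne k j with rfl | hk
      · simp
      · simp [Pi.single_eq_of_ne hk]
    · exact hidx m hm
  have hmono : StrictMono (fun m => e (Pi.single i m) j) := by
    intro m m' hmm
    have hlt : (Pi.single i m : Fin n → ℕ) < Pi.single i m' := by
      constructor
      · intro k; rcases eq_or_ne k i with rfl | hk
        · simpa using hmm.le
        · simp [Pi.single_eq_of_ne hk]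
      · intro hcon
        have := hcon i; simp only [Pi.single_eq_same] at this; omega
    have h3 := e.strictMono hlt
    rw [hform m, hform m'] at h3
    rcases lt_iff_le_and_ne.mp h3 with ⟨hle, hne⟩
    rw [Pi.le_def] at hle
    have h4 := hle j; simp only [Pi.single_eq_same] at h4
    rcases lt_or_eq_of_le h4 with h | h
    · exact h
    · exfalso; apply hne; rw [h]
  have hsurj : Function.Surjective (fun m => e (Pi.single i m) j) := by
    intro c0
    rcases Nat.eq_zero_or_pos c0 with rfl | hc0
    · refine ⟨0, ?_⟩
      simp only [hsz, orderIso_zero e]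
      rfl
    · have hex : e (e.symm (Pi.single j c0)) = Pi.single j c0 := e.apply_symm_apply _
      have hchx : ChainBelow (e.symm (Pi.single j c0)) :=
        chainBelow_map e.symm (chainBelow_single j c0)
      rcases chainBelow_form hchx with h0 | h
      · exfalso
        have h00 : e (e.symm (Pi.single j c0)) = 0 := by rw [h0]; exact orderIso_zero e
        rw [hex] at h00
        have := congrFun h00 j; simp only [Pi.single_eq_same, Pi.zero_apply] at this; omega
      · obtain ⟨i', m', hm', hform'⟩ := h
        have hcomp : Pi.single i 1 ≤ e.symm (Pi.single j c0) ∨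
            e.symm (Pi.single j c0) ≤ Pi.single i 1 := by
          rcases le_total c1 c0 with h | h
          · left
            have h5 : e (Pi.single i 1) ≤ e (e.symm (Pi.single j c0)) := by
              rw [h1, hex]
              intro k; rcases eq_or_ne k j with rfl | hk
              · simpa using h
              · simp [Pi.single_eq_of_ne hk]
            exact e.le_iff_le.mp h5
          · right
            have h5 : e (e.symm (Pi.single j c0)) ≤ e (Pi.single i 1) := by
              rw [h1, hex]
              intro k; rcases eq_or_ne k j with rfl | hk
              · simpa using h
              · simp [Pi.single_eq_of_ne hk]
            exact e.le_iff_le.mp h5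
        have hi' : i' = i := by
          by_contra hne
          rcases hcomp with h | h
          · rw [Pi.le_def] at h
            have h2 := h i
            have h3 : e.symm (Pi.single j c0) i = 0 := by
              rw [hform', Pi.single_eq_of_ne (fun hh => hne hh.symm)]
            rw [h3] at h2
            simp only [Pi.single_eq_same] at h2
            omega
          · rw [Pi.le_def] at h
            have h2 := h i'
            have h3 : e.symm (Pi.single j c0) i' = m' := by
              rw [hform', Pi.single_eq_same]
            rw [h3, Pi.single_eq_of_ne hne] at h2
            omega
        subst hi'
        refine ⟨m', ?_⟩
        have h6 : e (Pi.single i' m') = Pi.single j c0 := by rw [← hform', hex]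
        have := congrFun h6 j
        simpa using this
  have hid := natStrictMono_surj_id hmono hsurj
  exact ⟨j, fun m => by rw [hform m, hid m]⟩

/-- Every order automorphism of ℕ^n is a coordinate permutation. -/
lemma orderIso_pi_nat (e : (Fin n → ℕ) ≃o (Fin n → ℕ)) :
    ∃ σ : Equiv.Perm (Fin n), ∀ v j, e v j = v (σ j) := by
  choose σ0 hσ0 using orderIso_single e
  have hinj : Function.Injective σ0 := by
    intro i k h
    have h1 : e (Pi.single i 1) = e (Pi.single k 1) := by
      rw [hσ0 i 1, hσ0 k 1, h]
    have h2 := e.injective h1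
    have h3 := congrFun h2 i
    simp only [Pi.single_eq_same] at h3
    by_contra hne
    rw [Pi.single_eq_of_ne hne] at h3
    omega
  have hbij : Function.Bijective σ0 := Finite.injective_iff_bijective.mp hinj
  let τ : Equiv.Perm (Fin n) := Equiv.ofBijective σ0 hbij
  have hτdef : ∀ i, τ i = σ0 i := fun _ => rfl
  refine ⟨τ.symm, ?_⟩
  intro v j
  have hτj : σ0 (τ.symm j) = j := by rw [← hτdef]; exact τ.apply_symm_apply j
  apply le_antisymm
  · have h1 : Pi.single j (e v j) ≤ e v := single_le_iff.mpr le_rfl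
    have h2 : Pi.single (τ.symm j) (e v j) ≤ v := by
      have h3 : e (Pi.single (τ.symm j) (e v j)) ≤ e v := by
        rw [hσ0 (τ.symm j), hτj]; exact h1
      exact e.le_iff_le.mp h3
    simpa using h2 (τ.symm j)
  · have h1 : Pi.single (τ.symm j) (v (τ.symm j)) ≤ v := single_le_iff.mpr le_rfl
    have h2 : e (Pi.single (τ.symm j) (v (τ.symm j))) ≤ e v := e.monotone h1
    rw [hσ0 (τ.symm j), hτj] at h2
    simpa using h2 j
variable {n : ℕ}

/-- "z + v" in `(Fin n → ℕ+)` with `v : Fin n → ℕ`. -/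
def pa (z : Fin n → ℕ+) (v : Fin n → ℕ) : Fin n → ℕ+ :=
  fun j => ⟨(z j : ℕ) + v j, Nat.lt_of_lt_of_le (z j).2 (Nat.le_add_right _ _)⟩

lemma pa_coe (z : Fin n → ℕ+) (v : Fin n → ℕ) (j : Fin n) :
    ((pa z v j : ℕ+) : ℕ) = (z j : ℕ) + v j := rfl

lemma le_pa (z : Fin n → ℕ+) (v : Fin n → ℕ) : z ≤ pa z v := by
  rw [Pi.le_def]
  intro j
  rw [← PNat.coe_le_coe, pa_coe]
  exact Nat.le_add_right _ _

lemma pa_le_pa (z : Fin n → ℕ+) (v v' : Fin n → ℕ) : pa z v ≤ pa z v' ↔ v ≤ v' := by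
  rw [Pi.le_def, Pi.le_def]
  constructor
  · intro h j
    have := h j
    rw [← PNat.coe_le_coe, pa_coe, pa_coe] at this
    omega
  · intro h j
    rw [← PNat.coe_le_coe, pa_coe, pa_coe]
    exact Nat.add_le_add_left (h j) _

lemma pa_sub {c b : Fin n → ℕ+} (h : c ≤ b) :
    pa c (fun i => ((b i : ℕ+) : ℕ) - ((c i : ℕ+) : ℕ)) = b := by
  rw [Pi.le_def] at h
  funext i
  have hi := h i
  rw [← PNat.coe_le_coe] at hi
  rw [← PNat.coe_inj, pa_coe]
  omega

lemma classify {χ : PartialEquiv (Fin n → ℕ+) (Fin n → ℕ+)} (h : IsIPF χ)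
    {z t : Fin n → ℕ+} (hs : χ.source = Ici z) (ht : χ.target = Ici t) :
    ∃ σ : Equiv.Perm (Fin n), ∀ a, z ≤ a → ∀ i,
      ((χ a i : ℕ+) : ℕ) = ((t i : ℕ+) : ℕ) + (((a (σ i) : ℕ+) : ℕ) - ((z (σ i) : ℕ+) : ℕ)) := by
  obtain ⟨-, -, hmono⟩ := h
  have hmem : ∀ v : Fin n → ℕ, pa z v ∈ χ.source := fun v => by
    rw [hs]; exact le_pa z v
  have hmapt : ∀ v, t ≤ χ (pa z v) := fun v => by
    have := χ.map_source (hmem v); rwa [ht] at this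
  have hrep : ∀ v, pa t (fun i => ((χ (pa z v) i : ℕ+) : ℕ) - ((t i : ℕ+) : ℕ)) = χ (pa z v) :=
    fun v => pa_sub (hmapt v)
  have hmemt : ∀ w : Fin n → ℕ, pa t w ∈ χ.target := fun w => by
    rw [ht]; exact le_pa t w
  have hmems : ∀ w, z ≤ χ.symm (pa t w) := fun w => by
    have := χ.map_target (hmemt w); rwa [hs] at this
  have hrep' : ∀ w, pa z (fun i => ((χ.symm (pa t w) i : ℕ+) : ℕ) - ((z i : ℕ+) : ℕ))
      = χ.symm (pa t w) := fun w => pa_sub (hmems w)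
  let E : (Fin n → ℕ) ≃ (Fin n → ℕ) :=
    { toFun := fun v i => ((χ (pa z v) i : ℕ+) : ℕ) - ((t i : ℕ+) : ℕ)
      invFun := fun w i => ((χ.symm (pa t w) i : ℕ+) : ℕ) - ((z i : ℕ+) : ℕ)
      left_inv := by
        intro v
        funext i
        show ((χ.symm (pa t _) i : ℕ+) : ℕ) - ((z i : ℕ+) : ℕ) = v i
        rw [hrep v, χ.left_inv (hmem v), pa_coe]
        omega
      right_inv := by
        intro w
        funext i
        show ((χ (pa z _) i : ℕ+) : ℕ) - ((t i : ℕ+) : ℕ) = w i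
        rw [hrep' w, χ.right_inv (hmemt w), pa_coe]
        omega }
  have hEapp : ∀ v i, E v i = ((χ (pa z v) i : ℕ+) : ℕ) - ((t i : ℕ+) : ℕ) := fun v i => rfl
  let EO : (Fin n → ℕ) ≃o (Fin n → ℕ) :=
    { E with
      map_rel_iff' := by
        intro v v'
        show E v ≤ E v' ↔ v ≤ v'
        have step1 : E v ≤ E v' ↔ χ (pa z v) ≤ χ (pa z v') := by
          rw [Pi.le_def, Pi.le_def]
          constructor
          · intro hh i
            have h1 := hh i
            rw [hEapp, hEapp] at h1
            have h2 := (hmapt v) i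
            have h3 := (hmapt v') i
            rw [← PNat.coe_le_coe] at h2 h3 ⊢
            omega
          · intro hh i
            have h1 := hh i
            rw [hEapp, hEapp]
            rw [← PNat.coe_le_coe] at h1
            omega
        rw [step1, ← hmono _ (hmem v) _ (hmem v'), pa_le_pa] }
  obtain ⟨σ, hσ⟩ := orderIso_pi_nat EO
  refine ⟨σ, ?_⟩
  intro a ha i
  have hform : pa z (fun j => ((a j : ℕ+) : ℕ) - ((z j : ℕ+) : ℕ)) = a := pa_sub ha
  have h1 := hσ (fun j => ((a j : ℕ+) : ℕ) - ((z j : ℕ+) : ℕ)) i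
  have h2 : EO (fun j => ((a j : ℕ+) : ℕ) - ((z j : ℕ+) : ℕ)) i
      = ((χ a i : ℕ+) : ℕ) - ((t i : ℕ+) : ℕ) := by
    show E _ i = _
    rw [hEapp, hform]
  rw [h2] at h1
  have h3 : t ≤ χ a := by
    rw [← hform]; exact hmapt _
  rw [Pi.le_def] at h3
  have h4 := h3 i
  rw [← PNat.coe_le_coe] at h4
  omega

lemma coe_aj (w : Fin n → ℕ+) (j k : Fin n) :
    (((fun k => if k = j then w k + 1 else w k : Fin n → ℕ+) k : ℕ+) : ℕ)
      = if k = j then ((w k : ℕ+) : ℕ) + 1 else ((w k : ℕ+) : ℕ) := by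
  by_cases h : k = j <;> simp [h]

lemma rigid {z w : Fin n → ℕ+} (hzw : z ≤ w)
    {χ₁ χ₂ : PartialEquiv (Fin n → ℕ+) (Fin n → ℕ+)}
    (h₁ : IsIPF χ₁) (h₂ : IsIPF χ₂)
    (hs₁ : χ₁.source = Ici z) (hs₂ : χ₂.source = Ici z)
    (heq : EqOn χ₁ χ₂ (Ici w)) : χ₁ ≈ χ₂ := by
  obtain ⟨t₁, ht₁⟩ := h₁.2.1
  obtain ⟨t₂, ht₂⟩ := h₂.2.1
  obtain ⟨σ₁, hσ₁⟩ := classify h₁ hs₁ ht₁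
  obtain ⟨σ₂, hσ₂⟩ := classify h₂ hs₂ ht₂
  rw [Pi.le_def] at hzw
  have hzw' : ∀ k, ((z k : ℕ+) : ℕ) ≤ ((w k : ℕ+) : ℕ) := fun k => by
    rw [PNat.coe_le_coe]; exact hzw k
  have hwz : z ≤ w := by rw [Pi.le_def]; exact hzw
  -- base equation at w
  have hbase : ∀ i, ((t₁ i : ℕ+) : ℕ) + (((w (σ₁ i) : ℕ+) : ℕ) - ((z (σ₁ i) : ℕ+) : ℕ))
      = ((t₂ i : ℕ+) : ℕ) + (((w (σ₂ i) : ℕ+) : ℕ) - ((z (σ₂ i) : ℕ+) : ℕ)) := by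
    intro i
    have hww := heq (self_mem_Ici (a := w))
    have := congrFun hww i
    rw [← PNat.coe_inj] at this
    rw [hσ₁ w hwz i, hσ₂ w hwz i] at this
    exact this
  have hkey : ∀ i, σ₁ i = σ₂ i ∧ ((t₁ i : ℕ+) : ℕ) = ((t₂ i : ℕ+) : ℕ) := by
    intro i
    set j := σ₁ i with hj
    set aj : Fin n → ℕ+ := fun k => if k = j then w k + 1 else w k with haj
    have hwaj : w ≤ aj := by
      rw [Pi.le_def]
      intro k
      rw [← PNat.coe_le_coe, coe_aj]
      split <;> omega
    have hzaj : z ≤ aj := le_trans hwz hwaj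
    have heqaj : χ₁ aj = χ₂ aj := heq hwaj
    have haji : ∀ m : Fin n, ((aj m : ℕ+) : ℕ)
        = if m = j then ((w m : ℕ+) : ℕ) + 1 else ((w m : ℕ+) : ℕ) := fun m => coe_aj w j m
    have heq2 : ((t₁ i : ℕ+) : ℕ) + (((aj (σ₁ i) : ℕ+) : ℕ) - ((z (σ₁ i) : ℕ+) : ℕ))
        = ((t₂ i : ℕ+) : ℕ) + (((aj (σ₂ i) : ℕ+) : ℕ) - ((z (σ₂ i) : ℕ+) : ℕ)) := by
      have := congrFun heqaj i
      rw [← PNat.coe_inj] at this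
      rw [hσ₁ aj hzaj i, hσ₂ aj hzaj i] at this
      exact this
    have hσeq : σ₁ i = σ₂ i := by
      by_cases hcase : σ₂ i = j
      · rw [← hj, hcase]
      · exfalso
        have e1 : ((aj (σ₁ i) : ℕ+) : ℕ) = ((w (σ₁ i) : ℕ+) : ℕ) + 1 := by
          rw [haji]; simp [← hj]
        have e2 : ((aj (σ₂ i) : ℕ+) : ℕ) = ((w (σ₂ i) : ℕ+) : ℕ) := by
          rw [haji]; simp [hcase]
        have hb := hbase i
        have hz1 := hzw' (σ₁ i)
        have hz2 := hzw' (σ₂ i)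
        rw [e1, e2] at heq2
        omega
    refine ⟨hσeq, ?_⟩
    have hb := hbase i
    rw [hσeq] at hb
    have hz2 := hzw' (σ₂ i)
    omega
  -- conclude
  constructor
  · rw [hs₁, hs₂]
  · rw [hs₁]
    intro a ha
    have haz : z ≤ a := ha
    funext i
    rw [← PNat.coe_inj, hσ₁ a haz i, hσ₂ a haz i, (hkey i).1, (hkey i).2]

lemma finite_aux (w : Fin n → ℕ+) (φ : (Fin n → ℕ+) → (Fin n → ℕ+))
    (T : Set (PartialEquiv (Fin n → ℕ+) (Fin n → ℕ+)))
    (hT : ∀ χ ∈ T, IsIPF χ ∧ ∃ z, χ.source = Ici z ∧ z ≤ w ∧ EqOn (χ : _ → _) φ (Ici w)) :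
    (Quotient.mk PartialEquiv.eqOnSourceSetoid '' T).Finite := by
  have hG : ∀ (a b : PartialEquiv (Fin n → ℕ+) (Fin n → ℕ+)), a ≈ b → a.source = b.source :=
    fun a b h => h.1
  apply Set.Finite.of_finite_image
      (f := Quotient.lift (fun e : PartialEquiv (Fin n → ℕ+) (Fin n → ℕ+) => e.source) hG)
  · apply Set.Finite.subset ((Set.finite_Iic w).image (fun z => Ici z))
    rintro s ⟨q, ⟨χ, hχT, rfl⟩, rfl⟩
    obtain ⟨hIPF, z, hz, hzw, hEq⟩ := hT χ hχT
    exact ⟨z, hzw, hz.symm⟩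
  · rintro q₁ ⟨χ₁, hm₁, rfl⟩ q₂ ⟨χ₂, hm₂, rfl⟩ hGq
    obtain ⟨hI₁, z₁, hz₁, hzw₁, hE₁⟩ := hT χ₁ hm₁
    obtain ⟨hI₂, z₂, hz₂, hzw₂, hE₂⟩ := hT χ₂ hm₂
    have hsrc : χ₁.source = χ₂.source := hGq
    have hII : Ici z₁ = Ici z₂ := by rw [← hz₁, ← hz₂, hsrc]
    have hzz : z₁ = z₂ := by
      apply le_antisymm
      · have : z₂ ∈ Ici z₁ := by rw [hII]; exact self_mem_Ici
        exact this
      · have : z₁ ∈ Ici z₂ := by rw [← hII]; exact self_mem_Ici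
        exact this
    subst hzz
    apply Quotient.sound
    exact rigid hzw₁ hI₁ hI₂ hz₁ hz₂ (fun x hx => (hE₁ hx).trans (hE₂ hx).symm)


/-- For all α, β ∈ IPF(ℕ^n), the sets {χ : αχ = β} and {χ : χα = β} are
finite; i.e. left and right translations are finite-to-one.  (Elements of IPF(ℕ^n)
are partial maps, i.e. `EqOnSource`-classes (`≈`) of `PartialEquiv`s, so finiteness
is stated for the corresponding sets of classes; `α.trans χ` is "α followed by χ",
i.e. the product αχ in the right-action convention.) -/
theorem stmt19 (n : ℕ) (α β : PartialEquiv (Fin n → ℕ+) (Fin n → ℕ+))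
    (hα : IsIPF α) (hβ : IsIPF β) :
    Set.Finite (Quotient.mk (PartialEquiv.eqOnSourceSetoid) ''
      {χ | IsIPF χ ∧ α.trans χ ≈ β}) ∧
    Set.Finite (Quotient.mk (PartialEquiv.eqOnSourceSetoid) ''
      {χ | IsIPF χ ∧ χ.trans α ≈ β}) := by
  obtain ⟨xβ, hxβ⟩ := hβ.1
  constructor
  · apply finite_aux (α xβ) (fun a => β (α.symm a))
    rintro χ ⟨hχ, hcomp⟩
    obtain ⟨z, hz⟩ := hχ.1
    have hsrc : (α.trans χ).source = β.source := hcomp.1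
    rw [PartialEquiv.trans_source, hxβ] at hsrc
    have hxmem : xβ ∈ α.source ∩ ↑α ⁻¹' χ.source := by rw [hsrc]; exact self_mem_Ici
    refine ⟨hχ, z, hz, ?_, ?_⟩
    · have h1 : α xβ ∈ χ.source := hxmem.2
      rw [hz] at h1; exact h1
    · obtain ⟨yα, hyα⟩ := hα.2.1
      have heqon := hcomp.2
      intro a ha
      have hαx_t : α xβ ∈ α.target := α.map_source hxmem.1
      have hat : a ∈ α.target := by
        rw [hyα]; rw [hyα] at hαx_t; exact le_trans hαx_t (Set.mem_Ici.mp ha)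
      have hb : α.symm a ∈ α.source := α.map_target hat
      have hba : α (α.symm a) = a := α.right_inv hat
      have hxb : xβ ≤ α.symm a := by
        have h2 := hα.2.2 xβ hxmem.1 (α.symm a) hb
        rw [hba] at h2
        exact h2.mpr ha
      have h3 := heqon (show α.symm a ∈ (α.trans χ).source by
        rw [PartialEquiv.trans_source, hsrc]; exact hxb)
      rw [PartialEquiv.trans_apply, hba] at h3
      exact h3
  · apply finite_aux xβ (fun a => α.symm (β a))
    rintro χ ⟨hχ, hcomp⟩
    obtain ⟨z, hz⟩ := hχ.1
    have hsrc : (χ.trans α).source = β.source := hcomp.1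
    rw [PartialEquiv.trans_source, hxβ] at hsrc
    refine ⟨hχ, z, hz, ?_, ?_⟩
    · have hxmem : xβ ∈ χ.source ∩ ↑χ ⁻¹' α.source := by rw [hsrc]; exact self_mem_Ici
      have h1 := hxmem.1; rw [hz] at h1; exact h1
    · have heqon := hcomp.2
      intro a ha
      have hamem : a ∈ χ.source ∩ ↑χ ⁻¹' α.source := by rw [hsrc]; exact ha
      have h1 := heqon (show a ∈ (χ.trans α).source by
        rw [PartialEquiv.trans_source, hsrc]; exact ha)
      rw [PartialEquiv.trans_apply] at h1
      have h2 : α.symm (α (χ a)) = χ a := α.left_inv hamem.2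
      show χ a = α.symm (β a)
      rw [← h1, h2]
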